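/- With U(C) = −(C/R)^a (C − βx) − x on (0, R], if R > aβx/(1+a) then U attains its unique maximum on (0, R] at C = aβx/(1+a); if R ≤ aβx/(1+a) then U is strictly increasing on (0, R] and maximized at C = R. -/

import Mathlib

section aux

variable {a b x R : ℝ}

private lemma hasDerivAt_h (ha : 0 < a) (b : ℝ) {C : ℝ} (hC : 0 < C) :
    HasDerivAt (fun C : ℝ => C ^ a * (b - C))
      (C ^ (a - 1) * (a * b - (1 + a) * C)) C := by
  have h1 : HasDerivAt (fun C : ℝ => C ^ a) (a * C ^ (a - 1)) C :=
    Real.hasDerivAt_rpow_const (Or.inl hC.ne')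
  have h2 : HasDerivAt (fun C : ℝ => b - C) (-1) C := (hasDerivAt_id C).const_sub b
  have h := h1.mul h2
  have hCa : C ^ a = C ^ (a - 1) * C := by
    rw [← Real.rpow_add_one hC.ne' (a - 1)]; ring_nf
  exact h.congr_deriv (by rw [hCa]; ring)

private lemma h_mono (ha : 0 < a) (b : ℝ) {K : ℝ} (hK : 0 < K)
    (hKle : (1 + a) * K ≤ a * b) :
    StrictMonoOn (fun C : ℝ => C ^ a * (b - C)) (Set.Ioc 0 K) := by
  apply strictMonoOn_of_deriv_pos (convex_Ioc 0 K)
  · intro C hC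
    exact (hasDerivAt_h ha b hC.1).continuousAt.continuousWithinAt
  · intro C hC
    rw [interior_Ioc] at hC
    rw [(hasDerivAt_h ha b hC.1).deriv]
    have h1 : (0:ℝ) < C ^ (a - 1) := Real.rpow_pos_of_pos hC.1 _
    have h2 : (0:ℝ) < a * b - (1 + a) * C := by nlinarith [hC.2]
    positivity

private lemma h_anti (ha : 0 < a) (b : ℝ) {K R : ℝ} (hK : 0 < K)
    (hKge : a * b ≤ (1 + a) * K) :
    StrictAntiOn (fun C : ℝ => C ^ a * (b - C)) (Set.Icc K R) := by
  apply strictAntiOn_of_deriv_neg (convex_Icc K R)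
  · intro C hC
    have hCpos : 0 < C := lt_of_lt_of_le hK hC.1
    exact (hasDerivAt_h ha b hCpos).continuousAt.continuousWithinAt
  · intro C hC
    rw [interior_Icc] at hC
    have hCpos : 0 < C := lt_trans hK hC.1
    rw [(hasDerivAt_h ha b hCpos).deriv]
    have h1 : (0:ℝ) < C ^ (a - 1) := Real.rpow_pos_of_pos hCpos _
    have h2 : a * b - (1 + a) * C < 0 := by nlinarith [hC.1]
    nlinarith

end aux

theorem defender_optimal_counteroffer (a β x R : ℝ) (ha : 0 < a)
    (hβ : β ∈ Set.Ioc (0 : ℝ) 1) (hx : 0 < x) (hR : 0 < R) :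
    (a * β * x / (1 + a) < R →
      ∀ C ∈ Set.Ioc (0 : ℝ) R, C ≠ a * β * x / (1 + a) →
        -((C / R) ^ a) * (C - β * x) - x <
          -((a * β * x / (1 + a) / R) ^ a) * (a * β * x / (1 + a) - β * x) - x) ∧
    (R ≤ a * β * x / (1 + a) →
      StrictMonoOn (fun C : ℝ => -((C / R) ^ a) * (C - β * x) - x)
        (Set.Ioc 0 R)) := by
  obtain ⟨hβ0, hβ1⟩ := hβ
  set b := β * x with hb
  have hbpos : 0 < b := by positivity
  set K := a * β * x / (1 + a) with hKdef
  have h1a : (0:ℝ) < 1 + a := by linarith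
  have hKpos : 0 < K := by rw [hKdef]; positivity
  have hKeq : (1 + a) * K = a * b := by
    rw [hKdef, hb]; field_simp
  have hRa : (0:ℝ) < R ^ a := Real.rpow_pos_of_pos hR a
  -- rewrite U in terms of h
  have hU : ∀ C : ℝ, 0 ≤ C →
      -((C / R) ^ a) * (C - β * x) - x = (C ^ a * (b - C)) / R ^ a - x := by
    intro C hC
    rw [Real.div_rpow hC hR.le, hb]
    ring
  constructor
  · intro hKR C hC hne
    have key : C ^ a * (b - C) < K ^ a * (b - K) := by
      rcases lt_or_gt_of_ne hne with hlt | hgt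
      · exact h_mono ha b hKpos hKeq.le ⟨hC.1, hlt.le⟩ ⟨hKpos, le_refl K⟩ hlt
      · exact h_anti ha b hKpos hKeq.ge ⟨le_refl K, hKR.le⟩ ⟨hgt.le, hC.2⟩ hgt
    rw [hU C hC.1.le, hU K hKpos.le]
    have := div_lt_div_of_pos_right key hRa
    · linarith
  · intro hRK
    have hmono := (h_mono ha b hKpos hKeq.le).mono
      (Set.Ioc_subset_Ioc_right hRK : Set.Ioc 0 R ⊆ Set.Ioc 0 K)
    intro c hc d hd hcd
    simp only []
    rw [hU c hc.1.le, hU d hd.1.le]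
    have := div_lt_div_of_pos_right (hmono hc hd hcd) hRa
    linarith
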